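/- (Dual Pieri-type expansion) In the ring of symmetric functions over ℚ(t), let q_m = Σ_{λ ⊢ m} p_λ / z_λ(t) (so Σ_m q_m z^m = exp(Σ_{n≥1} (1-t^n) p_n z^n / n)), and let q_k^* be the adjoint of multiplication by q_k with respect to the Hall inner product ⟨p_λ, p_μ⟩ = δ_{λμ} z_λ. Then for any partition λ with l parts and any k ≥ 1: q_k^* s_λ = Σ_{τ} (1-t)^{l(τ)} s_{λ-τ}, where τ runs over compositions of k of length ≤ l, l(τ) is the number of nonzero parts of τ, and s_{λ-τ} denotes the (possibly zero or signed) straightened Schur function of the composition λ - τ. -/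

import Mathlib

open Finset MvPolynomial

noncomputable section

/-- The base field `ℚ(t)`. -/
abbrev F : Type := RatFunc ℚ

/-- The indeterminate `t` of `ℚ(t)`. -/
def tq : F := RatFunc.X

/-- The ring of symmetric functions over `ℚ(t)`, modelled as the polynomial
algebra on the power sums: the variable `n` represents the power sum `p_n`. -/
abbrev SymF : Type := MvPolynomial ℕ F

/-- `p_λ = ∏_i p_{λ_i}` for a multiset of parts `λ`. -/
def pPoly (s : Multiset ℕ) : SymF := (s.map fun i => (X i : SymF)).prod

/-- `z_λ = ∏_i i^{m_i(λ)} m_i(λ)!`. -/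
def zNat (s : Multiset ℕ) : ℕ := s.prod * ∏ i ∈ s.toFinset, (s.count i).factorial

/-- The complete homogeneous symmetric function `h_m = ∑_{λ ⊢ m} p_λ / z_λ`. -/
def hh (m : ℕ) : SymF :=
  ∑ lam : m.Partition, ((zNat lam.parts : F))⁻¹ • pPoly lam.parts

/-- `h_m` for integer index, with `h_m = 0` for `m < 0`. -/
def hInt (m : ℤ) : SymF := if m < 0 then 0 else hh m.toNat

/-- The (straightened, possibly zero or signed) Schur function of a tuple
`α ∈ ℤ^l`, via the Jacobi–Trudi determinant `s_α = det(h_{α_i - i + j})`. -/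
def schur {l : ℕ} (α : Fin l → ℤ) : SymF :=
  Matrix.det (Matrix.of fun i j : Fin l => hInt (α i - (i : ℕ) + (j : ℕ)))

/-- The adjoint `q_k^*` of multiplication by `q_k` with respect to the Hall
inner product `⟨p_λ, p_μ⟩ = z_λ δ_{λμ}`: the coefficient of `z^{-k}` in
`exp(∑_{n≥1} (1-t^n)(∂/∂p_n) z^{-n})`, i.e.
`q_k^* = ∑_{λ ⊢ k} (∏_i (1-t^{λ_i}) / ∏_i m_i(λ)!) ∂_λ`. -/
def Dop (t : F) (k : ℕ) : Module.End F SymF :=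
  ∑ lam : k.Partition,
    (((lam.parts.map fun i => 1 - t ^ i).prod) /
        (∏ i ∈ lam.parts.toFinset, ((lam.parts.count i).factorial : F))) •
      (((lam.parts.sort (· ≤ ·)).map fun i =>
        (MvPolynomial.pderiv i : Derivation F SymF SymF).toLinearMap).prod)

/-! ### Auxiliary definitions -/

instance : CharZero F := charZero_of_injective_algebraMap (algebraMap ℚ F).injective

/-- The single partial derivative `∂/∂p_i` as a linear endomorphism. -/
def D (i : ℕ) : Module.End F SymF :=
  ((MvPolynomial.pderiv i : Derivation F SymF SymF)).toLinearMap

/-- Product of partial derivatives along a list. -/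
def DL (L : List ℕ) : Module.End F SymF := (L.map D).prod

/-- Product of partial derivatives along a multiset. -/
def DM (s : Multiset ℕ) : Module.End F SymF := DL (s.sort (· ≤ ·))

/-- The weight `∏ (1 - t^{λ_i}) / ∏ m_i!` appearing in `Dop`. -/
def W (t : F) (s : Multiset ℕ) : F :=
  ((s.map fun i => 1 - t ^ i).prod) / (∏ i ∈ s.toFinset, ((s.count i).factorial : F))

lemma Dop_eq (t : F) (k : ℕ) :
    Dop t k = ∑ lam : k.Partition, W t lam.parts • DM lam.parts := rfl

lemma D_apply (i : ℕ) (f : SymF) : D i f = pderiv i f := rfl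

lemma pderiv_comm' (i j : ℕ) (f : SymF) :
    pderiv i (pderiv j f) = pderiv j (pderiv i f) := by
  induction f using MvPolynomial.induction_on with
  | C a => simp
  | add f g hf hg => simp [hf, hg]
  | mul_X f n hf =>
    have h2 : ∀ a b c : ℕ, pderiv a (pderiv b (X c : SymF)) = 0 := by
      intro a b c
      rcases eq_or_ne c b with rfl | h
      · simp [pderiv_X_self]
      · simp [pderiv_X_of_ne h]
    simp only [pderiv_mul, map_add, hf, h2]
    ring


lemma Dcomm (i j : ℕ) : Commute (D i) (D j) := by
  apply LinearMap.ext
  intro f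
  simpa [D, Module.End.mul_apply] using pderiv_comm' i j f


lemma DL_perm {L L' : List ℕ} (h : L.Perm L') : DL L = DL L' := by
  unfold DL
  refine List.Perm.prod_eq' (h.map D) ?_
  refine List.pairwise_map.mpr ?_
  have : ∀ (l : List ℕ), l.Pairwise fun a b => Commute (D a) (D b) := by
    intro l
    induction l with
    | nil => exact List.Pairwise.nil
    | cons a l ih => exact List.Pairwise.cons (fun b _ => Dcomm a b) ih
  exact this L


lemma DM_coe (L : List ℕ) : DM (↑L : Multiset ℕ) = DL L := by
  apply DL_perm
  rw [← Multiset.coe_eq_coe, Multiset.sort_eq]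


lemma DM_zero : DM 0 = 1 := by
  simp [DM, DL, Multiset.sort_zero]


lemma DM_cons (a : ℕ) (s : Multiset ℕ) : DM (a ::ₘ s) = D a * DM s := by
  have h : DM (a ::ₘ s) = DL (a :: s.sort (· ≤ ·)) := by
    rw [DM]
    apply DL_perm
    rw [← Multiset.coe_eq_coe, Multiset.sort_eq, ← Multiset.cons_coe, Multiset.sort_eq]
  rw [h, DL, List.map_cons, List.prod_cons]
  rfl


lemma DM_C_aux (a : F) (s : Multiset ℕ) : DM s (C a) = if s = 0 then C a else 0 := by
  induction s using Multiset.induction_on with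
  | empty => simp [DM_zero]
  | cons b s ih =>
    rw [DM_cons, Module.End.mul_apply, ih]
    have : (b ::ₘ s : Multiset ℕ) ≠ 0 := Multiset.cons_ne_zero
    rw [if_neg this]
    split_ifs with h
    · simp [D]
    · simp

lemma DM_C (s : Multiset ℕ) (hs : s ≠ 0) (a : F) : DM s (C a) = 0 := by
  rw [DM_C_aux, if_neg hs]

/-- Leibniz-type rule for `DM` applied to `X n * f`. -/
lemma DM_X_mul (s : Multiset ℕ) (n : ℕ) (f : SymF) :
    DM s (X n * f) = X n * DM s f + (s.count n : F) • DM (s.erase n) f := by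
  induction s using Multiset.induction_on generalizing f with
  | empty => simp [DM_zero]
  | cons a s ih =>
    rw [DM_cons, Module.End.mul_apply, ih f, map_add, map_smul]
    have hDa : ∀ (u : Multiset ℕ) (g : SymF), D a (DM u g) = DM (a ::ₘ u) g := by
      intro u g
      rw [DM_cons, Module.End.mul_apply]
    rcases eq_or_ne n a with rfl | hne
    · have hXn : D n (X n * DM s f) = DM s f + X n * D n (DM s f) := by
        show pderiv n (X n * DM s f) = _
        rw [pderiv_mul, pderiv_X_self, one_mul]
        rfl
      rw [hXn, hDa (s.erase n) f, Multiset.count_cons_self, Multiset.erase_cons_head,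
        Module.End.mul_apply]
      by_cases hn : n ∈ s
      · rw [Multiset.cons_erase hn]
        push_cast
        rw [add_smul, one_smul]
        abel
      · rw [Multiset.count_eq_zero_of_notMem hn]
        push_cast
        simp only [zero_smul, add_zero, zero_add, one_smul]
        abel
    · have hXn : D a (X n * DM s f) = X n * D a (DM s f) := by
        show pderiv a (X n * DM s f) = _
        rw [pderiv_mul, pderiv_X_of_ne hne, zero_mul, zero_add]
        rfl
      rw [hXn, hDa, hDa]
      rw [Multiset.count_cons_of_ne hne, Multiset.erase_cons_tail s (Ne.symm hne)]
      rw [DM_cons a s, Module.End.mul_apply]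


/-- Reindexing partitions of `m + r` containing the part `r` by partitions of `m`. -/
lemma part_sum_insert (r m : ℕ) (hr : 0 < r) (g : Multiset ℕ → SymF) :
    ∑ lam : Nat.Partition (m + r), (lam.parts.count r : F) • g lam.parts
      = ∑ mu : Nat.Partition m, ((mu.parts.count r : F) + 1) • g (r ::ₘ mu.parts) := by
  classical
  rw [← Finset.sum_filter_of_ne
    (p := fun lam : Nat.Partition (m + r) => r ∈ lam.parts)
    (fun x _ hx => by
      by_contra hmem
      rw [Multiset.count_eq_zero_of_notMem hmem] at hx
      simp at hx)]
  refine Finset.sum_bij'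
    (i := fun lam hlam => (⟨lam.parts.erase r,
      fun hi => lam.parts_pos (Multiset.mem_of_mem_erase hi), ?_⟩ : Nat.Partition m))
    (j := fun mu _ => (⟨r ::ₘ mu.parts,
      fun hi => by
        rcases Multiset.mem_cons.mp hi with rfl | h
        · exact hr
        · exact mu.parts_pos h, ?_⟩ : Nat.Partition (m + r)))
    ?_ ?_ ?_ ?_ ?_
  · have hmem : r ∈ lam.parts := by simpa using (Finset.mem_filter.mp hlam).2
    have := lam.parts_sum
    rw [← Multiset.cons_erase hmem, Multiset.sum_cons] at this
    omega
  · rw [Multiset.sum_cons, mu.parts_sum]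
    omega
  · intro a ha
    exact Finset.mem_univ _
  · intro b hb
    simp only [Finset.mem_filter, Finset.mem_univ, true_and]
    exact Multiset.mem_cons_self _ _
  · intro a ha
    have hmem : r ∈ a.parts := by simpa using (Finset.mem_filter.mp ha).2
    exact Nat.Partition.ext (Multiset.cons_erase hmem)
  · intro b hb
    exact Nat.Partition.ext (Multiset.erase_cons_head _ _)
  · intro a ha
    have hmem : r ∈ a.parts := by simpa using (Finset.mem_filter.mp ha).2
    conv_lhs => rw [← Multiset.cons_erase hmem]
    rw [Multiset.count_cons_self]
    push_cast
    ring_nf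


lemma prodFact_cons (r : ℕ) (s : Multiset ℕ) :
    (∏ i ∈ (r ::ₘ s).toFinset, ((r ::ₘ s).count i).factorial)
      = (s.count r + 1) * ∏ i ∈ s.toFinset, (s.count i).factorial := by
  classical
  rw [Multiset.toFinset_cons]
  by_cases h : r ∈ s
  · have hmem : r ∈ s.toFinset := Multiset.mem_toFinset.mpr h
    rw [Finset.insert_eq_self.mpr hmem]
    rw [← Finset.mul_prod_erase _ _ hmem, ← Finset.mul_prod_erase _ _ hmem]
    have hcong : ∏ i ∈ s.toFinset.erase r, ((r ::ₘ s).count i).factorial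
        = ∏ i ∈ s.toFinset.erase r, (s.count i).factorial := by
      refine Finset.prod_congr rfl fun i hi => ?_
      rw [Multiset.count_cons_of_ne (Finset.ne_of_mem_erase hi)]
    rw [hcong, Multiset.count_cons_self]
    rw [Nat.factorial_succ]
    ring
  · have hmem : r ∉ s.toFinset := fun hc => h (Multiset.mem_toFinset.mp hc)
    rw [Finset.prod_insert hmem]
    have hcong : ∏ i ∈ s.toFinset, ((r ::ₘ s).count i).factorial
        = ∏ i ∈ s.toFinset, (s.count i).factorial := by
      refine Finset.prod_congr rfl fun i hi => ?_
      rw [Multiset.count_cons_of_ne]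
      intro hir
      exact h (hir ▸ Multiset.mem_toFinset.mp hi)
    rw [hcong, Multiset.count_cons_self, Multiset.count_eq_zero_of_notMem h]
    simp [Nat.factorial]


lemma W_cons (t : F) (r : ℕ) (s : Multiset ℕ) :
    ((s.count r : F) + 1) * W t (r ::ₘ s) = (1 - t ^ r) * W t s := by
  have h1 : (∏ i ∈ (r ::ₘ s).toFinset, (((r ::ₘ s).count i).factorial : F))
      = ((s.count r : F) + 1) * ∏ i ∈ s.toFinset, ((s.count i).factorial : F) := by
    calc (∏ i ∈ (r ::ₘ s).toFinset, (((r ::ₘ s).count i).factorial : F))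
        = ((∏ i ∈ (r ::ₘ s).toFinset, ((r ::ₘ s).count i).factorial : ℕ) : F) := by
          push_cast
          rfl
      _ = _ := by
          rw [prodFact_cons]
          push_cast
          ring
  rw [W, W, Multiset.map_cons, Multiset.prod_cons, h1]
  have ha : (s.count r : F) + 1 ≠ 0 := by
    have h2 : ((s.count r + 1 : ℕ) : F) ≠ 0 := Nat.cast_ne_zero.mpr (Nat.succ_ne_zero _)
    push_cast at h2
    exact h2
  rcases eq_or_ne (∏ i ∈ s.toFinset, ((s.count i).factorial : F)) 0 with hN | hN
  · rw [hN]
    simp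
  · field_simp


lemma zNat_cons (r : ℕ) (s : Multiset ℕ) :
    zNat (r ::ₘ s) = (r * (s.count r + 1)) * zNat s := by
  rw [zNat, zNat, Multiset.prod_cons, prodFact_cons]
  ring


lemma zNat_ne_zero (s : Multiset ℕ) (h : ∀ i ∈ s, 0 < i) : (zNat s : F) ≠ 0 := by
  have h1 : 0 < zNat s := by
    rw [zNat]
    apply Nat.mul_pos
    · exact Multiset.prod_pos h
    · exact Finset.prod_pos fun i _ => Nat.factorial_pos _
  exact Nat.cast_ne_zero.mpr (Nat.pos_iff_ne_zero.mp h1)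


lemma partition_zero_parts (p : Nat.Partition 0) : p.parts = 0 := by
  exact Nat.Partition.partition_zero_parts p


lemma hh_zero : hh 0 = 1 := by
  rw [hh]
  have h1 : ∀ lam : Nat.Partition 0, ((zNat lam.parts : F))⁻¹ • pPoly lam.parts = 1 := by
    intro lam
    rw [Nat.Partition.partition_zero_parts lam]
    simp [zNat, pPoly]
  rw [Finset.sum_congr rfl fun lam _ => h1 lam, Finset.sum_const, Finset.card_univ]
  simp


lemma Dop_zero (t : F) : Dop t 0 = 1 := by
  rw [Dop_eq]
  have h1 : ∀ lam : Nat.Partition 0, W t lam.parts • DM lam.parts = 1 := by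
    intro lam
    rw [Nat.Partition.partition_zero_parts lam, DM_zero]
    simp [W]
  rw [Finset.sum_congr rfl fun lam _ => h1 lam, Finset.sum_const, Finset.card_univ]
  simp


lemma Dop_C (t : F) (k : ℕ) (hk : 0 < k) (a : F) : Dop t k (C a) = 0 := by
  rw [Dop_eq, LinearMap.sum_apply]
  refine Finset.sum_eq_zero fun lam _ => ?_
  rw [LinearMap.smul_apply, DM_C _ ?_ a, smul_zero]
  intro hc
  have := lam.parts_sum
  rw [hc] at this
  simp at this
  omega


/-- The key recursion for `Dop` on a product with a variable. -/
lemma Dop_X_mul (t : F) (k n : ℕ) (f : SymF) :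
    Dop t k (X n * f) = X n * Dop t k f
      + if n ≤ k then (1 - t ^ n) • Dop t (k - n) f else 0 := by
  rw [Dop_eq, LinearMap.sum_apply]
  have hexp : ∀ lam : Nat.Partition k,
      (W t lam.parts • DM lam.parts) (X n * f)
        = X n * (W t lam.parts • DM lam.parts) f
          + (lam.parts.count n : F) • (W t lam.parts • DM (lam.parts.erase n) f) := by
    intro lam
    rw [LinearMap.smul_apply, DM_X_mul, smul_add, LinearMap.smul_apply,
      Algebra.mul_smul_comm, smul_comm]
  rw [Finset.sum_congr rfl fun lam _ => hexp lam, Finset.sum_add_distrib, ← Finset.mul_sum]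
  have h1 : ∑ lam : Nat.Partition k, (W t lam.parts • DM lam.parts) f = Dop t k f := by
    rw [Dop_eq, LinearMap.sum_apply]
  rw [h1]
  congr 1
  rcases Nat.eq_zero_or_pos n with rfl | hn
  · have hz : ∀ lam : Nat.Partition k, (lam.parts.count 0 : F) = 0 := by
      intro lam
      rw [Multiset.count_eq_zero_of_notMem (fun hc => (lam.parts_pos hc).ne rfl)]
      simp
    rw [Finset.sum_congr rfl fun lam _ => by rw [hz lam, zero_smul]]
    simp
  · by_cases hnk : n ≤ k
    · rw [if_pos hnk]
      obtain ⟨m, rfl⟩ : ∃ m, k = m + n := ⟨k - n, (Nat.sub_add_cancel hnk).symm⟩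
      rw [part_sum_insert n m hn (fun s => W t s • DM (s.erase n) f)]
      have h2 : ∀ mu : Nat.Partition m,
          ((mu.parts.count n : F) + 1) • (W t (n ::ₘ mu.parts) • DM ((n ::ₘ mu.parts).erase n) f)
            = (1 - t ^ n) • (W t mu.parts • DM mu.parts f) := by
        intro mu
        rw [Multiset.erase_cons_head, smul_smul, smul_smul, W_cons]
      rw [Finset.sum_congr rfl fun mu _ => h2 mu, ← Finset.smul_sum]
      have h3 : m + n - n = m := by omega
      rw [h3]
      have h4 : Dop t m f = ∑ mu : Nat.Partition m, W t mu.parts • DM mu.parts f := by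
        rw [Dop_eq, LinearMap.sum_apply]
        exact Finset.sum_congr rfl fun mu _ => rfl
      rw [h4]
    · rw [if_neg hnk]
      refine Finset.sum_eq_zero fun lam _ => ?_
      have hc : n ∉ lam.parts := by
        intro hc
        have h4 := Multiset.single_le_sum (fun x _ => Nat.zero_le x) n hc
        rw [lam.parts_sum] at h4
        omega
      rw [Multiset.count_eq_zero_of_notMem hc]
      simp


/-- The Taylor-shift algebra homomorphism `p_n ↦ p_n + (1-t^n) z^n`. -/
def Phi (t : F) : SymF →ₐ[F] PowerSeries SymF :=
  aeval fun n => (PowerSeries.C (R := SymF)) (X n)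
    + (PowerSeries.C (R := SymF)) (C (1 - t ^ n)) * (PowerSeries.X : PowerSeries SymF) ^ n

lemma Dop_eq_coeff_Phi (t : F) (k : ℕ) (f : SymF) :
    Dop t k f = PowerSeries.coeff (R := SymF) k (Phi t f) := by
  induction f using MvPolynomial.induction_on generalizing k with
  | C a =>
      rw [Phi, aeval_C]
      have hC : (algebraMap F (PowerSeries SymF)) a = PowerSeries.C (R := SymF) (C a) := by
        rw [PowerSeries.algebraMap_apply]
        rfl
      rw [hC, PowerSeries.coeff_C]
      rcases Nat.eq_zero_or_pos k with rfl | hk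
      · rw [Dop_zero]
        simp
      · rw [Dop_C t k hk a, if_neg (Nat.pos_iff_ne_zero.mp hk)]
  | add p q hp hq =>
      rw [map_add, map_add, map_add, hp, hq]
  | mul_X p n hp =>
      have hXn : Phi t (X n) = (PowerSeries.C (R := SymF)) (X n)
          + (PowerSeries.C (R := SymF)) (C (1 - t ^ n)) * (PowerSeries.X : PowerSeries SymF) ^ n := by
        rw [Phi, aeval_X]
      rw [mul_comm p (X n), Dop_X_mul, map_mul, hXn, add_mul, map_add]
      congr 1
      · rw [PowerSeries.coeff_C_mul, ← hp]
      · rw [mul_right_comm, PowerSeries.coeff_mul_X_pow', PowerSeries.coeff_C_mul]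
        split_ifs with h
        · rw [← hp, smul_eq_C_mul]
        · rfl


/-- `Dop` on a finite product. -/
lemma Dop_prod (t : F) {l : ℕ} (k : ℕ) (f : Fin l → SymF) :
    Dop t k (∏ i, f i)
      = ∑ τ ∈ Finset.Nat.antidiagonalTuple l k, ∏ i, Dop t (τ i) (f i) := by
  classical
  rw [Dop_eq_coeff_Phi, map_prod, PowerSeries.coeff_prod]
  refine Finset.sum_bij' (i := fun μ _ => (⇑μ : Fin l → ℕ))
    (j := fun τ _ => Finsupp.equivFunOnFinite.symm τ) ?_ ?_ ?_ ?_ ?_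
  · intro μ hμ
    rw [Finset.Nat.mem_antidiagonalTuple]
    exact (Finset.mem_finsuppAntidiag.mp hμ).1
  · intro τ hτ
    rw [Finset.mem_finsuppAntidiag]
    constructor
    · rw [Finset.Nat.mem_antidiagonalTuple] at hτ
      simpa using hτ
    · exact Finset.subset_univ _
  · intro μ hμ
    exact Finsupp.equivFunOnFinite_symm_coe μ
  · intro τ hτ
    rfl
  · intro μ hμ
    exact Finset.prod_congr rfl fun i _ => (Dop_eq_coeff_Phi t (μ i) (f i)).symm


/-- Newton-type recursion for the `hh`. -/
lemma newton (m : ℕ) : (m : F) • hh m = ∑ r ∈ Finset.Icc 1 m, X r * hh (m - r) := by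
  rw [hh, Finset.smul_sum]
  have key : ∀ lam : Nat.Partition m,
      (m : F) • (((zNat lam.parts : F))⁻¹ • pPoly lam.parts)
        = ∑ r ∈ Finset.Icc 1 m, (lam.parts.count r : F) •
            ((r : F) • ((zNat lam.parts : F))⁻¹ • pPoly lam.parts) := by
    intro lam
    have hsub : lam.parts.toFinset ⊆ Finset.Icc 1 m := by
      intro i hi
      have hi' := Multiset.mem_toFinset.mp hi
      have h2 := Multiset.single_le_sum (fun x _ => Nat.zero_le x) i hi'
      rw [lam.parts_sum] at h2
      exact Finset.mem_Icc.mpr ⟨lam.parts_pos hi', h2⟩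
    have hsum0 : lam.parts.sum = ∑ r ∈ Finset.Icc 1 m, lam.parts.count r * r := by
      have h1 : lam.parts.sum = ∑ r ∈ lam.parts.toFinset, lam.parts.count r • r := by
        conv_lhs => rw [← Multiset.map_id lam.parts]
        rw [Finset.sum_multiset_map_count]
        rfl
      rw [h1]
      rw [Finset.sum_subset hsub (fun i _ hi => by
        rw [Multiset.count_eq_zero_of_notMem (fun hc => hi (Multiset.mem_toFinset.mpr hc))]
        simp)]
      simp [smul_eq_mul]
    have hsum : (m : F) = ∑ r ∈ Finset.Icc 1 m, (lam.parts.count r : F) * r := by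
      have := congrArg (fun n : ℕ => (n : F)) (lam.parts_sum ▸ hsum0)
      push_cast at this
      exact this
    rw [hsum, Finset.sum_smul]
    exact Finset.sum_congr rfl fun r _ => mul_smul _ _ _
  rw [Finset.sum_congr rfl fun lam _ => key lam, Finset.sum_comm]
  refine Finset.sum_congr rfl fun r hr => ?_
  obtain ⟨hr1, hr2⟩ := Finset.mem_Icc.mp hr
  obtain ⟨m', rfl⟩ : ∃ m', m = m' + r := ⟨m - r, (Nat.sub_add_cancel hr2).symm⟩
  rw [part_sum_insert r m' hr1 (fun s => (r : F) • ((zNat s : F))⁻¹ • pPoly s)]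
  have h5 : m' + r - r = m' := by omega
  rw [h5, hh, Finset.mul_sum]
  refine Finset.sum_congr rfl fun mu _ => ?_
  have hp : pPoly (r ::ₘ mu.parts) = X r * pPoly mu.parts := by
    rw [pPoly, pPoly, Multiset.map_cons, Multiset.prod_cons]
  rw [hp, smul_smul, smul_smul, mul_smul_comm]
  congr 1
  rw [zNat_cons]
  have hz : (zNat mu.parts : F) ≠ 0 := zNat_ne_zero _ (fun i hi => mu.parts_pos hi)
  have hr0 : (r : F) ≠ 0 := Nat.cast_ne_zero.mpr (by omega)
  have hc1 : ((mu.parts.count r : F) + 1) ≠ 0 := by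
    have h2 : ((mu.parts.count r + 1 : ℕ) : F) ≠ 0 := Nat.cast_ne_zero.mpr (Nat.succ_ne_zero _)
    push_cast at h2
    exact h2
  push_cast
  field_simp


lemma hInt_ofNat (m : ℕ) : hInt (m : ℤ) = hh m := by
  rw [hInt, if_neg (by omega)]
  simp


lemma hInt_neg {e : ℤ} (he : e < 0) : hInt e = 0 := by
  rw [hInt, if_pos he]


lemma newton_int (m : ℕ) (e : ℤ) (he : e ≤ (m : ℤ)) :
    ∑ r ∈ Finset.Icc 1 m, X r * hInt (e - (r : ℤ)) = (e : F) • hInt e := by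
  rcases lt_or_ge e 0 with hneg | hpos
  · rw [hInt_neg hneg, smul_zero]
    refine Finset.sum_eq_zero fun r hr => ?_
    have hr1 := (Finset.mem_Icc.mp hr).1
    rw [hInt_neg (by omega), mul_zero]
  · obtain ⟨j, rfl⟩ : ∃ j : ℕ, e = (j : ℤ) := ⟨e.toNat, (Int.toNat_of_nonneg hpos).symm⟩
    rw [hInt_ofNat]
    have hj : j ≤ m := by exact_mod_cast he
    have h0 : ∑ r ∈ Finset.Icc 1 j, X r * hInt ((j:ℤ) - r)
        = ∑ r ∈ Finset.Icc 1 m, X r * hInt ((j:ℤ) - r) :=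
      Finset.sum_subset (Finset.Icc_subset_Icc_right hj) (fun r hr hnot => by
        have hlt : (j:ℤ) - r < 0 := by
          simp only [Finset.mem_Icc] at hr hnot
          have : j < r := by omega
          omega
        rw [hInt_neg hlt, mul_zero])
    rw [← h0]
    have h1 : ∀ r ∈ Finset.Icc 1 j, X r * hInt ((j:ℤ) - r) = X r * hh (j - r) := by
      intro r hr
      have hr2 := (Finset.mem_Icc.mp hr).2
      have hcast : ((j:ℤ) - r) = ((j - r : ℕ) : ℤ) := by omega
      rw [hcast, hInt_ofNat]
    rw [Finset.sum_congr rfl h1, ← newton]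
    norm_cast


lemma geom_aux (t : F) (j : ℕ) :
    ∑ r ∈ Finset.Icc 1 j, ((1 - t ^ r) * (1 - t)) = (j : F) * (1 - t) - t * (1 - t ^ j) := by
  induction j with
  | zero => simp
  | succ j ih =>
    rw [Finset.sum_Icc_succ_top (by omega), ih]
    push_cast
    ring


/-- Main computation: `q_k^* h_m = (1-t) h_{m-k}`. -/
lemma Dop_hh (t : F) (m : ℕ) :
    ∀ k : ℕ, 0 < k → Dop t k (hh m) = (1 - t) • hInt ((m : ℤ) - (k : ℤ)) := by
  induction m using Nat.strong_induction_on with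
  | _ m ih =>
  intro k hk
  rcases Nat.eq_zero_or_pos m with rfl | hm
  · rw [hh_zero]
    have h1 : Dop t k (1 : SymF) = 0 := by
      have h2 : (1 : SymF) = C 1 := by simp
      rw [h2, Dop_C t k hk]
    rw [h1, hInt_neg (by omega), smul_zero]
  · have hm0 : (m : F) ≠ 0 := Nat.cast_ne_zero.mpr (by omega)
    refine smul_right_injective SymF hm0 ?_
    show (m : F) • Dop t k (hh m) = (m : F) • ((1 - t) • hInt ((m : ℤ) - (k : ℤ)))
    have hLHS : (m : F) • Dop t k (hh m)
        = ∑ r ∈ Finset.Icc 1 m, Dop t k (X r * hh (m - r)) := by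
      rw [← map_smul, newton, map_sum]
    rw [hLHS]
    have hterm : ∀ r ∈ Finset.Icc 1 m,
        Dop t k (X r * hh (m - r))
          = (1 - t) • (X r * hInt (((m : ℤ) - k) - r))
            + (if r ≤ k then (if r = k then 1 - t ^ k else (1 - t ^ r) * (1 - t)) else 0)
                • hInt ((m : ℤ) - k) := by
      intro r hr
      obtain ⟨hr1, hr2⟩ := Finset.mem_Icc.mp hr
      have hcast1 : ((m - r : ℕ) : ℤ) - (k : ℤ) = ((m : ℤ) - k) - r := by
        push_cast [Nat.cast_sub hr2]
        ring
      rw [Dop_X_mul, ih (m - r) (by omega) k hk, hcast1, mul_smul_comm]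
      refine congrArg (fun z => (1 - t) • (X r * hInt (((m : ℤ) - k) - r)) + z) ?_
      split_ifs with h1 h2
      · subst h2
        have hc2 : ((m - r : ℕ) : ℤ) = (m : ℤ) - r := by
          push_cast [Nat.cast_sub hr2]
          ring
        rw [Nat.sub_self, Dop_zero, Module.End.one_apply, ← hc2, hInt_ofNat]
      · have hrk : r < k := lt_of_le_of_ne h1 h2
        have hc3 : ((m - r : ℕ) : ℤ) - ((k - r : ℕ) : ℤ) = (m : ℤ) - k := by
          push_cast [Nat.cast_sub hr2, Nat.cast_sub (le_of_lt hrk)]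
          ring
        rw [ih (m - r) (by omega) (k - r) (by omega), hc3, smul_smul]
      · exact (zero_smul F _).symm
    rw [Finset.sum_congr rfl hterm, Finset.sum_add_distrib]
    have hS1 : ∑ r ∈ Finset.Icc 1 m, (1 - t) • (X r * hInt (((m : ℤ) - k) - r))
        = ((1 - t) * (((m : ℤ) - (k : ℤ)) : F)) • hInt ((m : ℤ) - k) := by
      rw [← Finset.smul_sum, newton_int m ((m : ℤ) - k) (by omega), smul_smul]
      norm_cast
    have hS2 : ∑ r ∈ Finset.Icc 1 m,
        (if r ≤ k then (if r = k then 1 - t ^ k else (1 - t ^ r) * (1 - t)) else 0)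
          • hInt ((m : ℤ) - k)
        = ((k : F) * (1 - t)) • hInt ((m : ℤ) - k) := by
      rw [← Finset.sum_smul]
      rcases le_or_gt k m with hkm | hkm
      · refine congrArg (fun z : F => z • hInt ((m : ℤ) - k)) ?_
        rw [← Finset.sum_subset (Finset.Icc_subset_Icc_right hkm) (fun r hr hnot => by
          rw [if_neg]
          simp only [Finset.mem_Icc] at hr hnot
          omega)]
        obtain ⟨K, rfl⟩ : ∃ K, k = K + 1 := ⟨k - 1, by omega⟩
        rw [Finset.sum_Icc_succ_top (by omega), if_pos (by omega), if_pos rfl]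
        have hc : ∀ r ∈ Finset.Icc 1 K,
            (if r ≤ K + 1 then (if r = K + 1 then 1 - t ^ (K + 1) else (1 - t ^ r) * (1 - t)) else 0)
              = (1 - t ^ r) * (1 - t) := by
          intro r hr
          obtain ⟨_, h2⟩ := Finset.mem_Icc.mp hr
          rw [if_pos (by omega), if_neg (by omega)]
        rw [Finset.sum_congr rfl hc, geom_aux]
        push_cast
        ring
      · rw [hInt_neg (by omega), smul_zero, smul_zero]
    rw [hS1, hS2, ← add_smul, smul_smul]
    refine congrArg (fun z : F => z • hInt ((m : ℤ) - k)) ?_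
    push_cast
    ring

lemma Dop_hInt (t : F) (e : ℤ) (c : ℕ) :
    Dop t c (hInt e) = (if c = 0 then (1 : F) else 1 - t) • hInt (e - (c : ℤ)) := by
  rcases Nat.eq_zero_or_pos c with rfl | hc
  · rw [Dop_zero, if_pos rfl, Module.End.one_apply]
    simp
  · rw [if_neg (by omega)]
    rcases lt_or_ge e 0 with he | he
    · rw [hInt_neg he, map_zero, hInt_neg (by omega), smul_zero]
    · obtain ⟨j, rfl⟩ : ∃ j : ℕ, e = (j : ℤ) := ⟨e.toNat, (Int.toNat_of_nonneg he).symm⟩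
      rw [hInt_ofNat, Dop_hh t j c hc]

/-- dual Pieri-type expansion: for a partition `λ` with `l` parts
and `k ≥ 1`, `q_k^* s_λ = ∑_{τ ⊨ k, l(τ) ≤ l} (1-t)^{l(τ)} s_{λ-τ}`, where `τ`
runs over all tuples of `l` nonnegative integers summing to `k`, `l(τ)` is the
number of nonzero entries of `τ`, and `s_{λ-τ}` is the straightened Schur
function of the tuple `λ - τ`. -/
theorem qstar_schur (l k : ℕ) (hk : 1 ≤ k) (lam : Fin l → ℕ)
    (hpos : ∀ i, 0 < lam i) (hanti : Antitone lam) :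
    Dop tq k (schur fun i => (lam i : ℤ))
      = ∑ τ ∈ Finset.Nat.antidiagonalTuple l k,
          ((1 - tq) ^ (Finset.univ.filter fun j => τ j ≠ 0).card) •
            schur (fun i => (lam i : ℤ) - (τ i : ℤ)) := by
  classical
  have hre : ∀ σ : Equiv.Perm (Fin l), ∀ G : (Fin l) → ℕ → SymF,
      ∑ τ ∈ Finset.Nat.antidiagonalTuple l k, ∏ j, G j (τ j)
        = ∑ τ ∈ Finset.Nat.antidiagonalTuple l k, ∏ j, G j (τ (σ j)) := by
    intro σ G
    refine Finset.sum_nbij' (i := fun τ => τ ∘ ⇑σ⁻¹) (j := fun τ => τ ∘ ⇑σ) ?_ ?_ ?_ ?_ ?_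
    · intro τ hτ
      rw [Finset.Nat.mem_antidiagonalTuple] at hτ ⊢
      rw [← hτ]
      exact Equiv.sum_comp σ⁻¹ τ
    · intro τ hτ
      rw [Finset.Nat.mem_antidiagonalTuple] at hτ ⊢
      rw [← hτ]
      exact Equiv.sum_comp σ τ
    · intro τ _
      funext j
      simp
    · intro τ _
      funext j
      simp
    · intro τ _
      refine Finset.prod_congr rfl fun j _ => ?_
      simp [Function.comp]
  have step : ∀ σ : Equiv.Perm (Fin l),
      Dop tq k (Equiv.Perm.sign σ •
          ∏ j, Matrix.of (fun i j : Fin l => hInt ((lam i : ℤ) - (i : ℕ) + (j : ℕ))) (σ j) j)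
        = ∑ τ ∈ Finset.Nat.antidiagonalTuple l k,
            ((1 - tq) ^ (Finset.univ.filter fun j => τ j ≠ 0).card) •
              (Equiv.Perm.sign σ •
                ∏ j, Matrix.of
                  (fun i j : Fin l => hInt (((lam i : ℤ) - (τ i : ℤ)) - (i : ℕ) + (j : ℕ)))
                  (σ j) j) := by
    intro σ
    rw [Units.smul_def, map_zsmul, Dop_prod,
      hre σ (fun j c => Dop tq c (Matrix.of (fun i j : Fin l => hInt ((lam i : ℤ) - (i : ℕ) + (j : ℕ))) (σ j) j))]
    have hprod : ∀ τ ∈ Finset.Nat.antidiagonalTuple l k,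
        (∏ j, Dop tq (τ (σ j))
            (Matrix.of (fun i j : Fin l => hInt ((lam i : ℤ) - (i : ℕ) + (j : ℕ))) (σ j) j))
          = ((1 - tq) ^ (Finset.univ.filter fun j => τ j ≠ 0).card) •
              ∏ j, Matrix.of
                (fun i j : Fin l => hInt (((lam i : ℤ) - (τ i : ℤ)) - (i : ℕ) + (j : ℕ)))
                (σ j) j := by
      intro τ _
      have hterm : ∀ j : Fin l,
          Dop tq (τ (σ j))
              (Matrix.of (fun i j : Fin l => hInt ((lam i : ℤ) - (i : ℕ) + (j : ℕ))) (σ j) j)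
            = C (if τ (σ j) = 0 then (1 : F) else 1 - tq) *
                Matrix.of
                  (fun i j : Fin l => hInt (((lam i : ℤ) - (τ i : ℤ)) - (i : ℕ) + (j : ℕ)))
                  (σ j) j := by
        intro j
        rw [Matrix.of_apply, Matrix.of_apply, Dop_hInt]
        have harg : ((lam (σ j) : ℤ) - ((σ j : Fin l) : ℕ) + (j : ℕ)) - (τ (σ j) : ℤ)
            = ((lam (σ j) : ℤ) - (τ (σ j) : ℤ)) - ((σ j : Fin l) : ℕ) + (j : ℕ) := by
          ring
        rw [harg, smul_eq_C_mul]
      rw [Finset.prod_congr rfl fun j _ => hterm j, Finset.prod_mul_distrib,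
        ← map_prod (C : F →+* SymF)]
      have hww : (∏ j : Fin l, (if τ (σ j) = 0 then (1 : F) else 1 - tq))
          = ∏ j : Fin l, (if τ j = 0 then (1 : F) else 1 - tq) :=
        Equiv.prod_comp σ (fun j => if τ j = 0 then (1 : F) else 1 - tq)
      have hw : (∏ j : Fin l, (if τ j = 0 then (1 : F) else 1 - tq))
          = (1 - tq) ^ (Finset.univ.filter fun j => τ j ≠ 0).card := by
        rw [← Finset.prod_filter_mul_prod_filter_not Finset.univ (fun j => τ j ≠ 0)]
        rw [Finset.prod_congr rfl fun j hj => if_neg (Finset.mem_filter.mp hj).2,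
          Finset.prod_congr rfl fun j hj => if_pos (by
            have := (Finset.mem_filter.mp hj).2
            simpa using this)]
        rw [Finset.prod_const, Finset.prod_const, one_pow, mul_one]
      rw [hww, hw, ← smul_eq_C_mul]
    rw [Finset.sum_congr rfl hprod, Finset.smul_sum]
    refine Finset.sum_congr rfl fun τ _ => ?_
    rw [smul_comm, Units.smul_def]
  rw [schur, Matrix.det_apply, map_sum, Finset.sum_congr rfl fun σ _ => step σ,
    Finset.sum_comm]
  refine Finset.sum_congr rfl fun τ _ => ?_
  rw [schur, Matrix.det_apply, Finset.smul_sum]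

end
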